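/- No finite-time extinction in the endemic regime: Assume A is irreducible, s(BA − Γ) > 0, and c_i ≥ 2 for all i. Let x : [0,∞) → ℝⁿ be a solution of the controlled SIS system with 0 < x_i(0) ≤ 1/c_i for all i. Then 0 < x_i(t) ≤ 1/c_i for every i ∈ {1,…,n} and every t ≥ 0; in particular, no component of the solution ever reaches zero. -/

import Mathlib

open Matrix Filter Topology

/-- Spectral abscissa: the maximum of the real parts of the complex eigenvalues. -/
noncomputable def specAbs {n : ℕ} (M : Matrix (Fin n) (Fin n) ℝ) : ℝ :=
  sSup (Complex.re '' spectrum ℂ (M.map (Complex.ofReal ·)))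

/-- Irreducibility of a matrix. -/
def MatIrreducible {n : ℕ} (A : Matrix (Fin n) (Fin n) ℝ) : Prop :=
  ∀ S : Set (Fin n), S.Nonempty → S ≠ Set.univ → ∃ i ∈ S, ∃ j ∉ S, 0 < A i j

/-- The controlled SIS vector field. -/
def sisF {n : ℕ} (A : Matrix (Fin n) (Fin n) ℝ) (β γ c : Fin n → ℝ)
    (x : Fin n → ℝ) (i : Fin n) : ℝ :=
  β i * (1 - c i * x i) * (1 - x i) * (∑ j, A i j * x j) - γ i * x i

/-- A solution of the controlled SIS system. -/
def IsSol {n : ℕ} (A : Matrix (Fin n) (Fin n) ℝ) (β γ c : Fin n → ℝ)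
    (x : ℝ → Fin n → ℝ) : Prop :=
  ∀ t : ℝ, 0 ≤ t → HasDerivWithinAt x (sisF A β γ c (x t)) (Set.Ici 0) t

open Set in

private lemma monoAux (f d : ℝ → ℝ) (a b : ℝ)
    (hf : ∀ t ∈ Icc a b, HasDerivWithinAt f (d t) (Icc a b) t)
    (hd : ∀ t ∈ Ioo a b, 0 ≤ d t) : MonotoneOn f (Icc a b) := by
  apply monotoneOn_of_deriv_nonneg (convex_Icc a b)
    (fun t ht => (hf t ht).continuousWithinAt)
  · rw [interior_Icc]
    intro t ht
    exact ((hf t (Ioo_subset_Icc_self ht)).hasDerivAt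
      (Icc_mem_nhds ht.1 ht.2)).differentiableAt.differentiableWithinAt
  · rw [interior_Icc]
    intro t ht
    rw [((hf t (Ioo_subset_Icc_self ht)).hasDerivAt (Icc_mem_nhds ht.1 ht.2)).deriv]
    exact hd t ht

open Set in
private lemma crossAux (f d : ℝ → ℝ) (a b M : ℝ)
    (hf : ∀ t ∈ Icc a b, HasDerivWithinAt f (d t) (Icc a b) t)
    (h0 : 0 ≤ f a)
    (hM : ∀ t ∈ Icc a b, f t ≤ 0 → M * f t ≤ d t) :
    ∀ t ∈ Icc a b, 0 ≤ f t := by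
  by_contra hcon
  push_neg at hcon
  obtain ⟨t₁, ht₁, hneg⟩ := hcon
  have hcf : ContinuousOn f (Icc a b) := fun t ht => (hf t ht).continuousWithinAt
  set S : Set ℝ := Icc a t₁ ∩ f ⁻¹' (Ici 0) with hS
  have hSne : S.Nonempty := ⟨a, ⟨le_refl a, ht₁.1⟩, h0⟩
  have hsub : Icc a t₁ ⊆ Icc a b := Icc_subset_Icc le_rfl ht₁.2
  have hScl : IsClosed S :=
    ContinuousOn.preimage_isClosed_of_isClosed (hcf.mono hsub) isClosed_Icc isClosed_Ici
  have hSbd : BddAbove S := isCompact_Icc.bddAbove.mono inter_subset_left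
  set σ := sSup S with hσ
  have hσS : σ ∈ S := hScl.csSup_mem hSne hSbd
  have hσle : σ ≤ t₁ := hσS.1.2
  have haσ : a ≤ σ := hσS.1.1
  have hfσ : 0 ≤ f σ := hσS.2
  have hσlt : σ < t₁ := lt_of_le_of_ne hσle (fun he => absurd (he ▸ hfσ) (not_le.2 hneg))
  have hnegOn : ∀ t ∈ Ioc σ t₁, f t < 0 := by
    intro t ht
    by_contra h
    push_neg at h
    exact absurd (le_csSup hSbd (⟨⟨haσ.trans ht.1.le, ht.2⟩, h⟩ : t ∈ S)) (not_le.2 ht.1)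
  set h : ℝ → ℝ := fun t => f t * Real.exp (-M * t) with hh
  have hsub2 : Icc σ t₁ ⊆ Icc a b := Icc_subset_Icc haσ ht₁.2
  have hderiv : ∀ t ∈ Icc σ t₁,
      HasDerivWithinAt h ((d t - M * f t) * Real.exp (-M * t)) (Icc σ t₁) t := by
    intro t ht
    have h1 : HasDerivWithinAt f (d t) (Icc σ t₁) t := (hf t (hsub2 ht)).mono hsub2
    have h2 : HasDerivAt (fun s => Real.exp (-M * s)) (Real.exp (-M * t) * (-M)) t := by
      simpa using (((hasDerivAt_id t).const_mul (-M)).exp)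
    have : HasDerivWithinAt (fun y => f y * Real.exp (-M * y))
        (d t * Real.exp (-M * t) + f t * (Real.exp (-M * t) * -M)) (Icc σ t₁) t :=
      h1.fun_mul h2.hasDerivWithinAt
    convert this using 1
    ring
  have hmono : MonotoneOn h (Icc σ t₁) := by
    apply monoAux _ _ σ t₁ hderiv
    intro t ht
    have hft : f t < 0 := hnegOn t ⟨ht.1, ht.2.le⟩
    have := hM t (hsub2 (Ioo_subset_Icc_self ht)) hft.le
    have he := Real.exp_pos (-M * t)
    nlinarith
  have hle := hmono (left_mem_Icc.2 hσlt.le) (right_mem_Icc.2 hσlt.le) hσlt.le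
  have h1 : 0 ≤ h σ := mul_nonneg hfσ (Real.exp_pos _).le
  have h2 : h t₁ < 0 := mul_neg_of_neg_of_pos hneg (Real.exp_pos _)
  linarith

open Set in
theorem stmt17 {n : ℕ} (hn : 2 ≤ n) (A : Matrix (Fin n) (Fin n) ℝ)
    (hA : ∀ i j, 0 ≤ A i j) (hirr : MatIrreducible A)
    (β γ c : Fin n → ℝ)
    (hβ : ∀ i, 0 < β i) (hγ : ∀ i, 0 ≤ γ i) (hc : ∀ i, 1 < c i)
    (hs : 0 < specAbs (Matrix.diagonal β * A - Matrix.diagonal γ))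
    (hc2 : ∀ i, 2 ≤ c i)
    (x : ℝ → Fin n → ℝ) (hx : IsSol A β γ c x)
    (h0 : ∀ i, x 0 i ∈ Set.Ioc 0 (1 / c i)) :
    ∀ t : ℝ, 0 ≤ t → ∀ i, x t i ∈ Set.Ioc 0 (1 / c i) := by
  have hc0 : ∀ i, 0 < c i := fun i => lt_trans one_pos (hc i)
  have hxi : ∀ t, 0 ≤ t → ∀ i,
      HasDerivWithinAt (fun s => x s i) (sisF A β γ c (x t) i) (Set.Ici 0) t :=
    fun t ht i => (hasDerivWithinAt_pi.1 (hx t ht)) i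
  have hcont : ∀ i, ContinuousOn (fun s => x s i) (Set.Ici 0) :=
    fun i t ht => (hxi t ht i).continuousWithinAt
  -- Strict positivity, assuming the box holds strictly before T
  have posAux : ∀ T, 0 ≤ T →
      (∀ s, 0 ≤ s → s < T → ∀ i, x s i ∈ Set.Icc 0 (1 / c i)) →
      ∀ s ∈ Set.Icc 0 T, ∀ i, 0 < x s i := by
    intro T hT hbox s hs i
    have hd : ∀ t ∈ Icc (0:ℝ) T, HasDerivWithinAt (fun t => x t i * Real.exp (γ i * t))
        ((β i * (1 - c i * x t i) * (1 - x t i) * (∑ j, A i j * x t j)) * Real.exp (γ i * t))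
        (Icc 0 T) t := by
      intro t ht
      have h1 := (hxi t ht.1 i).mono (Icc_subset_Ici_self : Icc (0:ℝ) T ⊆ Ici 0)
      have h2 : HasDerivAt (fun s => Real.exp (γ i * s)) (Real.exp (γ i * t) * γ i) t := by
        simpa using (((hasDerivAt_id t).const_mul (γ i)).exp)
      have : HasDerivWithinAt (fun s => x s i * Real.exp (γ i * s))
          (sisF A β γ c (x t) i * Real.exp (γ i * t) + x t i * (Real.exp (γ i * t) * γ i))
          (Icc 0 T) t :=
        h1.fun_mul h2.hasDerivWithinAt
      convert this using 1
      simp only [sisF]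
      ring
    have hmono : MonotoneOn (fun t => x t i * Real.exp (γ i * t)) (Icc 0 T) := by
      apply monoAux _ _ 0 T hd
      intro t ht
      have hb := hbox t ht.1.le ht.2
      have h1 : 0 ≤ 1 - c i * x t i := by
        have := (hb i).2
        rw [le_div_iff₀ (hc0 i)] at this
        linarith
      have h2 : 0 ≤ 1 - x t i := by
        have h3 : x t i ≤ 1 := le_trans (hb i).2 (by
          rw [div_le_one (hc0 i)]; linarith [hc i])
        linarith
      have h3 : 0 ≤ ∑ j, A i j * x t j :=
        Finset.sum_nonneg fun j _ => mul_nonneg (hA i j) (hb j).1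
      have := mul_nonneg (mul_nonneg (mul_nonneg (mul_nonneg (hβ i).le h1) h2) h3)
        (Real.exp_pos (γ i * t)).le
      linarith
    have hle := hmono (left_mem_Icc.2 hT) hs hs.1
    have h0pos : 0 < x 0 i * Real.exp (γ i * 0) := by
      have := (h0 i).1
      positivity
    have hep := Real.exp_pos (γ i * s)
    by_contra hle0
    push_neg at hle0
    have hle' : x 0 i * Real.exp (γ i * 0) ≤ x s i * Real.exp (γ i * s) := hle
    nlinarith [hle', h0pos, hep, mul_nonneg (neg_nonneg.2 hle0) hep.le]
  -- The closed box is invariant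
  have key : ∀ t, 0 ≤ t → ∀ i, x t i ∈ Set.Icc 0 (1 / c i) := by
    by_contra hcon
    push_neg at hcon
    obtain ⟨t₀, ht₀, i₀, hbad₀⟩ := hcon
    set Bd : Set ℝ := {t : ℝ | 0 ≤ t ∧ ∃ i, x t i ∉ Set.Icc 0 (1 / c i)} with hBd
    have hne : Bd.Nonempty := ⟨t₀, ht₀, i₀, hbad₀⟩
    have hbdd : BddBelow Bd := ⟨0, fun s hs => hs.1⟩
    set τ := sInf Bd with hτ
    have hτ0 : 0 ≤ τ := le_csInf hne fun s hs => hs.1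
    have boxlt : ∀ s, 0 ≤ s → s < τ → ∀ i, x s i ∈ Set.Icc 0 (1 / c i) := by
      intro s hs hsτ i
      by_contra hb
      exact absurd (csInf_le hbdd ⟨hs, i, hb⟩) (not_le.2 hsτ)
    have boxτ : ∀ i, x τ i ∈ Set.Icc 0 (1 / c i) := by
      rcases eq_or_lt_of_le hτ0 with he | hpos
      · intro i
        have := h0 i
        rw [← he]
        exact ⟨this.1.le, this.2⟩
      · intro i
        by_contra hb
        have hca : ContinuousAt (fun s => x s i) τ :=
          (hxi τ hτ0 i).hasDerivAt (Ici_mem_nhds hpos) |>.continuousAt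
        have hev : ∀ᶠ s in 𝓝 τ, x s i ∉ Set.Icc 0 (1 / c i) :=
          hca.eventually_mem (isClosed_Icc.isOpen_compl.mem_nhds hb)
        obtain ⟨ε, hε, hball⟩ := Metric.eventually_nhds_iff_ball.1 hev
        set s := max (τ - ε / 2) (τ / 2) with hsdef
        have hs1 : s < τ := max_lt (by linarith) (by linarith)
        have hs0 : 0 ≤ s := le_max_of_le_right (by linarith)
        have hsl : τ - ε / 2 ≤ s := le_max_left _ _
        have hsball : s ∈ Metric.ball τ ε := by
          rw [Metric.mem_ball, Real.dist_eq, abs_of_neg (by linarith : s - τ < 0)]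
          linarith
        exact absurd (csInf_le hbdd ⟨hs0, i, hball s hsball⟩) (not_le.2 hs1)
    have posτ : ∀ s ∈ Icc (0:ℝ) τ, ∀ i, 0 < x s i := posAux τ hτ0 boxlt
    have hposev : ∀ᶠ s in 𝓝[≥] τ, ∀ i, 0 < x s i := by
      rw [eventually_all]
      intro i
      have hcw : ContinuousWithinAt (fun s => x s i) (Set.Ici τ) τ :=
        ((hcont i) τ hτ0).mono (Ici_subset_Ici.2 hτ0)
      exact hcw.eventually (eventually_gt_nhds (posτ τ ⟨hτ0, le_rfl⟩ i))
    obtain ⟨u, hu, husub⟩ := mem_nhdsGE_iff_exists_Icc_subset.1 hposev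
    have hsubI : Icc τ u ⊆ Ici (0:ℝ) := fun t ht => hτ0.trans ht.1
    have hup : ∀ s ∈ Icc τ u, ∀ i, x s i ≤ 1 / c i := by
      intro s hs i
      have hxc : ∀ j, ContinuousOn (fun t => x t j) (Icc τ u) :=
        fun j => (hcont j).mono hsubI
      have hconta : ContinuousOn
          (fun t => c i * β i * (1 - x t i) * (∑ j, A i j * x t j)) (Icc τ u) :=
        ((continuousOn_const.mul (continuousOn_const.sub (hxc i)))).mul
          (continuousOn_finset_sum _ fun j _ => continuousOn_const.mul (hxc j))
      obtain ⟨M, hMb⟩ := isCompact_Icc.exists_bound_of_continuousOn hconta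
      have hcr := crossAux (fun t => 1 - c i * x t i)
          (fun t => -(c i * sisF A β γ c (x t) i)) τ u M ?_ ?_ ?_
      · have h5 : 0 ≤ 1 - c i * x s i := hcr s hs
        rw [le_div_iff₀ (hc0 i)]
        linarith
      · intro t ht
        exact ((hxi t (hsubI ht) i).mono hsubI).const_mul (c i) |>.const_sub 1
      · show (0:ℝ) ≤ 1 - c i * x τ i
        have := (boxτ i).2
        rw [le_div_iff₀ (hc0 i)] at this
        linarith
      · intro t ht hfle
        have hxpos : ∀ j, 0 < x t j := husub ht
        have hab : -(c i * β i * (1 - x t i) * (∑ j, A i j * x t j)) ≤ M :=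
          (neg_le_abs _).trans (by rw [← Real.norm_eq_abs]; exact hMb t ht)
        have hid : -(c i * sisF A β γ c (x t) i) =
            (-(c i * β i * (1 - x t i) * (∑ j, A i j * x t j))) * (1 - c i * x t i)
              + c i * γ i * x t i := by
          simp only [sisF]; ring
        show M * (1 - c i * x t i) ≤ -(c i * sisF A β γ c (x t) i)
        rw [hid]
        have h2 : 0 ≤ c i * γ i * x t i :=
          mul_nonneg (mul_nonneg (hc0 i).le (hγ i)) (hxpos i).le
        have hfle' : 1 - c i * x t i ≤ 0 := hfle
        nlinarith [hab, hfle', h2]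
    have hub : u ≤ τ := by
      apply le_csInf hne
      intro s hsBd
      by_contra hlt
      push_neg at hlt
      obtain ⟨hs0, i, hbadi⟩ := hsBd
      apply hbadi
      rcases lt_trichotomy s τ with h | h | h
      · exact boxlt s hs0 h i
      · subst h; exact boxτ i
      · have hsIcc : s ∈ Icc τ u := ⟨h.le, hlt.le⟩
        exact ⟨(husub hsIcc i).le, hup s hsIcc i⟩
    linarith
  intro t ht i
  exact ⟨posAux t ht (fun s hs _ => key s hs) t ⟨ht, le_rfl⟩ i, (key t ht i).2⟩
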